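/- For every x ≥ 0 and every integer r ≥ 0, the r-th central moment admits the expansion M_n^{(α,β)}[t ↦ (t − x)^r](x) = Σ_{j=0}^r binomial(r, j) · (−x)^{r−j} · μ_j^{(α,β)}(x), where μ_j^{(α,β)}(x) = ((α+1)_j / (n−β)^j) · e^{−nx} · Σ_{m=0}^∞ ((α+j+1)_m / ((α+1)_m · m!)) · (nx)^m, with (a)_m = a(a+1)⋯(a+m−1) the Pochhammer symbol. -/

import Mathlib

open MeasureTheory Real Filter

/-- The Szász–Mirakyan basis functions `ψ_{n,k}(x) = e^{-nx} (nx)^k / k!`. -/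
noncomputable def psi (n k : ℕ) (x : ℝ) : ℝ :=
  Real.exp (-(n * x)) * (n * x) ^ k / (Nat.factorial k)

/-- The Szász–Mirakyan–Laguerre–Durrmeyer operator `M_n^{(α,β)}`. -/
noncomputable def M (α β : ℝ) (n : ℕ) (f : ℝ → ℝ) (x : ℝ) : ℝ :=
  ∑' k : ℕ, (((n : ℝ) - β) ^ ((k : ℝ) + α + 1) / Real.Gamma ((k : ℝ) + α + 1)) *
    (∫ t in Set.Ioi (0 : ℝ), f t * t ^ ((k : ℝ) + α) * Real.exp (-((n : ℝ) - β) * t)) *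
    psi n k x

/-- The `r`-th moment `μ_r^{(α,β)}(x) = M_n^{(α,β)}[t ↦ t^r](x)`. -/
noncomputable def mu (α β : ℝ) (n : ℕ) (r : ℕ) (x : ℝ) : ℝ :=
  M α β n (fun t => t ^ r) x

open Set Polynomial

lemma Gamma_ascPoch (x : ℝ) (hx : 0 < x) (m : ℕ) :
    Real.Gamma (x + m) = Real.Gamma x * (ascPochhammer ℝ m).eval x := by
  induction m with
  | zero => simp
  | succ m ih =>
      have hxm : x + (m : ℝ) ≠ 0 := by positivity
      rw [Nat.cast_add, Nat.cast_one, ← add_assoc, Real.Gamma_add_one hxm,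
        ascPochhammer_succ_eval, ih]
      ring

lemma poch_id (a : ℝ) (ha : 0 < a) (j k : ℕ) :
    (ascPochhammer ℝ j).eval (a + k) * (ascPochhammer ℝ k).eval a
      = (ascPochhammer ℝ j).eval a * (ascPochhammer ℝ k).eval (a + j) := by
  have hG : Real.Gamma a ≠ 0 := (Real.Gamma_pos_of_pos ha).ne'
  have h1 : Real.Gamma (a + k + j) = Real.Gamma a * ((ascPochhammer ℝ k).eval a *
      (ascPochhammer ℝ j).eval (a + k)) := by
    rw [Gamma_ascPoch (a + k) (by positivity) j, Gamma_ascPoch a ha k, mul_assoc]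
  have h2 : Real.Gamma (a + j + k) = Real.Gamma a * ((ascPochhammer ℝ j).eval a *
      (ascPochhammer ℝ k).eval (a + j)) := by
    rw [Gamma_ascPoch (a + j) (by positivity) k, Gamma_ascPoch a ha j, mul_assoc]
  have h3 : a + (k : ℝ) + j = a + j + k := by ring
  rw [h3, h2] at h1
  have := mul_left_cancel₀ hG h1.symm
  linarith [this]

lemma integrable_aux {s c : ℝ} (hs : -1 < s) (hc : 0 < c) :
    IntegrableOn (fun t : ℝ => t ^ s * Real.exp (-(c * t))) (Ioi 0) := by
  have h := integrableOn_rpow_mul_exp_neg_mul_rpow hs (by norm_num : (0:ℝ) < 1) hc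
  refine h.congr_fun (fun t ht => ?_) measurableSet_Ioi
  beta_reduce
  rw [Real.rpow_one, neg_mul]

lemma integral_val {s c : ℝ} (hs : -1 < s) (hc : 0 < c) :
    ∫ t in Ioi (0:ℝ), t ^ s * Real.exp (-(c * t)) = Real.Gamma (s+1) / c ^ (s+1) := by
  have h := integral_rpow_mul_exp_neg_mul_Ioi (a := s + 1) (r := c) (by linarith) hc
  rw [add_sub_cancel_right] at h
  rw [h, Real.div_rpow (by norm_num) hc.le, Real.one_rpow]
  ring

lemma asc_double (j : ℕ) (x : ℝ) (hx : 1 ≤ x) :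
    (ascPochhammer ℝ j).eval (x + 1) ≤ 2 ^ j * (ascPochhammer ℝ j).eval x := by
  induction j with
  | zero => simp
  | succ j ih =>
      rw [ascPochhammer_succ_eval, ascPochhammer_succ_eval]
      have hP : 0 ≤ (ascPochhammer ℝ j).eval x :=
        (ascPochhammer_pos j x (by linarith)).le
      have hj : (0:ℝ) ≤ j := Nat.cast_nonneg j
      calc (ascPochhammer ℝ j).eval (x+1) * (x + 1 + j)
          ≤ 2 ^ j * (ascPochhammer ℝ j).eval x * (x + 1 + j) :=
            mul_le_mul_of_nonneg_right ih (by linarith)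
        _ ≤ 2 ^ j * (ascPochhammer ℝ j).eval x * (2 * (x + j)) := by
            apply mul_le_mul_of_nonneg_left (by linarith) (by positivity)
        _ = 2 ^ (j+1) * ((ascPochhammer ℝ j).eval x * (x + j)) := by ring

lemma summable_aux (j : ℕ) (a y : ℝ) (ha : 0 < a) (hy : 0 ≤ y) :
    Summable (fun k : ℕ => (ascPochhammer ℝ j).eval ((k:ℝ) + a) * y ^ k / (Nat.factorial k)) := by
  apply summable_of_ratio_norm_eventually_le (r := 1/2) (by norm_num)
  filter_upwards [eventually_ge_atTop (max 1 ⌈2^(j+1)*y⌉₊)] with k hk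
  have hk1 : 1 ≤ k := le_trans (le_max_left _ _) hk
  have hk2 : 2^(j+1)*y ≤ (k:ℝ) := by
    calc 2^(j+1)*y ≤ (⌈2^(j+1)*y⌉₊ : ℝ) := Nat.le_ceil _
      _ ≤ k := Nat.cast_le.mpr (le_trans (le_max_right _ _) hk)
  have hk1' : (1:ℝ) ≤ (k:ℝ) := by exact_mod_cast hk1
  have hPpos : 0 < (ascPochhammer ℝ j).eval ((k:ℝ) + a) :=
    ascPochhammer_pos j _ (by linarith)
  have hPpos' : 0 < (ascPochhammer ℝ j).eval ((k:ℝ) + 1 + a) :=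
    ascPochhammer_pos j _ (by linarith)
  have hd : (ascPochhammer ℝ j).eval ((k:ℝ) + 1 + a) ≤
      2 ^ j * (ascPochhammer ℝ j).eval ((k:ℝ) + a) := by
    have : (k:ℝ) + 1 + a = ((k:ℝ) + a) + 1 := by ring
    rw [this]
    exact asc_double j _ (by linarith)
  set A := (ascPochhammer ℝ j).eval ((k:ℝ) + 1 + a) with hA
  set P := (ascPochhammer ℝ j).eval ((k:ℝ) + a) with hPd
  have hfac : (0:ℝ) < (Nat.factorial k : ℝ) := by exact_mod_cast Nat.factorial_pos k
  have hcast : ((k+1:ℕ):ℝ) + a = (k:ℝ) + 1 + a := by push_cast; ring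
  have hfs : (Nat.factorial (k+1) : ℝ) = ((k:ℝ)+1) * (Nat.factorial k : ℝ) := by
    rw [Nat.factorial_succ]; push_cast; ring
  have h3 : 2 * y * A ≤ ((k:ℝ)+1) * P := by
    calc 2 * y * A ≤ 2 * y * (2^j * P) := by
          apply mul_le_mul_of_nonneg_left hd (by positivity)
      _ = (2^(j+1) * y) * P := by ring
      _ ≤ ((k:ℝ)+1) * P := mul_le_mul_of_nonneg_right (by linarith) hPpos.le
  have h4 : 2 * (A * y^(k+1)) ≤ ((k:ℝ)+1) * P * y^k := by
    calc 2 * (A * y^(k+1)) = (2 * y * A) * y^k := by ring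
      _ ≤ (((k:ℝ)+1) * P) * y^k := mul_le_mul_of_nonneg_right h3 (pow_nonneg hy k)
  rw [hcast, hfs, ← hA]
  rw [Real.norm_of_nonneg (div_nonneg (mul_nonneg hPpos'.le (pow_nonneg hy _)) (by positivity)),
    Real.norm_of_nonneg (div_nonneg (mul_nonneg hPpos.le (pow_nonneg hy _)) (by positivity))]
  rw [div_le_iff₀ (by positivity : (0:ℝ) < ((k:ℝ)+1) * (Nat.factorial k:ℝ))]
  have he : 1/2 * (P*y^k/(Nat.factorial k:ℝ)) * (((k:ℝ)+1)*(Nat.factorial k:ℝ))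
      = ((k:ℝ)+1)*P*y^k/2 := by field_simp
  rw [he]; linarith

lemma key {α c : ℝ} (hα : -1 < α) (hc : 0 < c) (j k : ℕ) :
    c ^ ((k:ℝ) + α + 1) / Real.Gamma ((k:ℝ) + α + 1) *
      ∫ t in Ioi (0:ℝ), (t ^ j) * t ^ ((k:ℝ) + α) * Real.exp (-(c * t))
    = (ascPochhammer ℝ j).eval ((k:ℝ) + α + 1) / c ^ j := by
  have hs : (-1:ℝ) < (k:ℝ) + α + j := by
    have h1 : (0:ℝ) ≤ k := Nat.cast_nonneg k
    have h2 : (0:ℝ) ≤ j := Nat.cast_nonneg j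
    linarith
  have h1 : (∫ t in Ioi (0:ℝ), (t ^ j) * t ^ ((k:ℝ) + α) * Real.exp (-(c * t)))
      = ∫ t in Ioi (0:ℝ), t ^ ((k:ℝ) + α + j) * Real.exp (-(c * t)) := by
    refine setIntegral_congr_fun measurableSet_Ioi (fun t ht => ?_)
    have h2 : t ^ ((k:ℝ) + α + (j:ℝ)) = t ^ ((k:ℝ) + α) * t ^ j := by
      rw [Real.rpow_add ht, Real.rpow_natCast]
    rw [h2]; ring
  rw [h1, integral_val hs hc]
  have harg : (k:ℝ) + α + (j:ℝ) + 1 = ((k:ℝ) + α + 1) + (j:ℕ) := by ring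
  rw [harg, Gamma_ascPoch ((k:ℝ) + α + 1) (by linarith [Nat.cast_nonneg (α := ℝ) k]) j]
  have hG : Real.Gamma ((k:ℝ) + α + 1) ≠ 0 :=
    (Real.Gamma_pos_of_pos (by linarith [Nat.cast_nonneg (α := ℝ) k])).ne'
  have hr1 : c ^ (((k:ℝ) + α + 1) + (j:ℕ)) = c ^ ((k:ℝ) + α + 1) * c ^ j := by
    rw [Real.rpow_add hc, Real.rpow_natCast]
  rw [hr1]
  have hcp : c ^ ((k:ℝ) + α + 1) ≠ 0 := (Real.rpow_pos_of_pos hc _).ne'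
  have hcj : c ^ j ≠ 0 := by positivity
  field_simp

lemma step1 {α β x : ℝ} (hα : -1 < α) {n : ℕ} (hn : β < n) (r k : ℕ) :
    (((n : ℝ) - β) ^ ((k : ℝ) + α + 1) / Real.Gamma ((k : ℝ) + α + 1)) *
      (∫ t in Set.Ioi (0 : ℝ), (t - x) ^ r * t ^ ((k : ℝ) + α) * Real.exp (-((n : ℝ) - β) * t)) *
      psi n k x
    = ∑ j ∈ Finset.range (r + 1),
        (r.choose j : ℝ) * (-x) ^ (r - j) *
          ((ascPochhammer ℝ j).eval ((k:ℝ) + α + 1) / ((n : ℝ) - β) ^ j * psi n k x) := by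
  set c : ℝ := (n : ℝ) - β with hcd
  have hc : 0 < c := sub_pos.mpr hn
  have hsk : (-1:ℝ) < (k:ℝ) + α := by
    have : (0:ℝ) ≤ k := Nat.cast_nonneg k
    linarith
  have hint : ∀ j : ℕ, IntegrableOn
      (fun t : ℝ => t ^ j * t ^ ((k:ℝ) + α) * Real.exp (-(c * t))) (Ioi 0) := by
    intro j
    have hs : (-1:ℝ) < (k:ℝ) + α + j := by
      have : (0:ℝ) ≤ j := Nat.cast_nonneg j
      linarith
    refine (integrable_aux hs hc).congr_fun (fun t ht => ?_) measurableSet_Ioi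
    have h2 : t ^ ((k:ℝ) + α + (j:ℝ)) = t ^ ((k:ℝ) + α) * t ^ j := by
      rw [Real.rpow_add ht, Real.rpow_natCast]
    beta_reduce
    rw [h2]; ring
  have hexp : ∀ t ∈ Ioi (0:ℝ),
      (t - x) ^ r * t ^ ((k:ℝ) + α) * Real.exp (-c * t)
      = ∑ j ∈ Finset.range (r + 1),
          ((-x) ^ (r - j) * (r.choose j : ℝ)) * (t ^ j * t ^ ((k:ℝ) + α) * Real.exp (-(c * t))) := by
    intro t _
    rw [sub_eq_add_neg, add_pow, Finset.sum_mul, Finset.sum_mul]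
    refine Finset.sum_congr rfl fun j _ => ?_
    rw [neg_mul]
    ring
  rw [setIntegral_congr_fun measurableSet_Ioi hexp,
    integral_finset_sum _ (fun j _ => ((hint j).const_mul _)),
    Finset.mul_sum, Finset.sum_mul]
  refine Finset.sum_congr rfl fun j _ => ?_
  rw [integral_const_mul]
  rw [show (((n : ℝ) - β) ^ ((k : ℝ) + α + 1) / Real.Gamma ((k : ℝ) + α + 1)) *
      (((-x) ^ (r - j) * (r.choose j : ℝ)) *
        ∫ t in Ioi (0:ℝ), t ^ j * t ^ ((k:ℝ) + α) * Real.exp (-(c * t)))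
    = ((-x) ^ (r - j) * (r.choose j : ℝ)) *
      (c ^ ((k : ℝ) + α + 1) / Real.Gamma ((k : ℝ) + α + 1) *
        ∫ t in Ioi (0:ℝ), t ^ j * t ^ ((k:ℝ) + α) * Real.exp (-(c * t))) from by ring]
  rw [key hα hc j k]
  ring

/-- Expansion of the `r`-th central moment in terms of raw moments, each expressed via
the confluent hypergeometric series `₁F₁(α+j+1; α+1; nx)`. -/
theorem stmt_10 (α β : ℝ) (hα : -1 < α) (n : ℕ) (hn : β < n) (r : ℕ) (x : ℝ) (hx : 0 ≤ x) :
    M α β n (fun t => (t - x) ^ r) x =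
      ∑ j ∈ Finset.range (r + 1),
        (r.choose j : ℝ) * (-x) ^ (r - j) *
          ((ascPochhammer ℝ j).eval (α + 1) / ((n : ℝ) - β) ^ j * Real.exp (-((n : ℝ) * x)) *
            ∑' m : ℕ,
              (ascPochhammer ℝ m).eval (α + (j : ℝ) + 1) /
                ((ascPochhammer ℝ m).eval (α + 1) * (Nat.factorial m : ℝ)) *
                ((n : ℝ) * x) ^ m) := by
  have hc : 0 < (n : ℝ) - β := sub_pos.mpr hn
  have hα1 : 0 < α + 1 := by linarith
  have hnx : 0 ≤ (n : ℝ) * x := by positivity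
  -- summability of each j-series
  have hsum : ∀ j : ℕ, Summable (fun k : ℕ => (r.choose j : ℝ) * (-x) ^ (r - j) *
      ((ascPochhammer ℝ j).eval ((k:ℝ) + α + 1) / ((n : ℝ) - β) ^ j * psi n k x)) := by
    intro j
    apply Summable.mul_left
    have base := summable_aux j (α+1) ((n:ℝ)*x) hα1 hnx
    refine (base.mul_left (Real.exp (-((n:ℝ)*x)) / ((n : ℝ) - β) ^ j)).congr fun k => ?_
    rw [show (k:ℝ) + (α+1) = (k:ℝ) + α + 1 from by ring]
    unfold psi
    push_cast
    ring
  calc M α β n (fun t => (t - x) ^ r) x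
      = ∑' k : ℕ, ∑ j ∈ Finset.range (r + 1),
          (r.choose j : ℝ) * (-x) ^ (r - j) *
            ((ascPochhammer ℝ j).eval ((k:ℝ) + α + 1) / ((n : ℝ) - β) ^ j * psi n k x) := by
        refine tsum_congr fun k => ?_
        exact step1 hα hn r k
    _ = ∑ j ∈ Finset.range (r + 1), ∑' k : ℕ,
          (r.choose j : ℝ) * (-x) ^ (r - j) *
            ((ascPochhammer ℝ j).eval ((k:ℝ) + α + 1) / ((n : ℝ) - β) ^ j * psi n k x) :=
        Summable.tsum_finsetSum (fun j _ => hsum j)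
    _ = _ := by
        refine Finset.sum_congr rfl fun j _ => ?_
        rw [tsum_mul_left]
        congr 1
        have hterm : ∀ k : ℕ,
            (ascPochhammer ℝ j).eval ((k:ℝ) + α + 1) / ((n : ℝ) - β) ^ j * psi n k x
            = ((ascPochhammer ℝ j).eval (α + 1) / ((n : ℝ) - β) ^ j * Real.exp (-((n : ℝ) * x))) *
              ((ascPochhammer ℝ k).eval (α + (j : ℝ) + 1) /
                ((ascPochhammer ℝ k).eval (α + 1) * (Nat.factorial k : ℝ)) *
                ((n : ℝ) * x) ^ k) := by
          intro k
          have hid := poch_id (α+1) hα1 j k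
          have hPk : (ascPochhammer ℝ k).eval (α + 1) ≠ 0 :=
            (ascPochhammer_pos k _ hα1).ne'
          have hfk : (Nat.factorial k : ℝ) ≠ 0 := by
            exact_mod_cast (Nat.factorial_pos k).ne'
          have hcj : ((n : ℝ) - β) ^ j ≠ 0 := by positivity
          have hidd : (ascPochhammer ℝ j).eval ((k:ℝ) + α + 1)
              = (ascPochhammer ℝ j).eval (α + 1) *
                (ascPochhammer ℝ k).eval (α + (j:ℝ) + 1) /
                (ascPochhammer ℝ k).eval (α + 1) := by
            rw [show (k:ℝ) + α + 1 = (α + 1) + (k:ℝ) from by ring,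
              show α + (j:ℝ) + 1 = (α + 1) + (j:ℝ) from by ring]
            field_simp
            linarith [hid]
          rw [hidd]
          unfold psi
          push_cast
          field_simp
        rw [tsum_congr hterm, tsum_mul_left]
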